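/- Fix real numbers q > 0 and p ∈ (0,1), and define c : ℕ → ℝ by c_n = 3^{n − q·nᵖ}. Then (i) limsup_{n→∞} c_n^{1/n} = 3, and (ii) the function R(n) = min{ k ∈ ℕ : c_{2k+2}/c_{2k} > 9 − 1/n } satisfies R(n) / (9·(ln 3)·q·p·2ᵖ·n)^{1/(1−p)} → 1 as n → ∞. -/

import Mathlib

/-- The hypothetical reduced-cogrowth sequence `cₙ = 3^{n − q·nᵖ}`. -/
noncomputable def hypCogrowth (q p : ℝ) (n : ℕ) : ℝ :=
  (3 : ℝ) ^ ((n : ℝ) - q * (n : ℝ) ^ p)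

/-- `R(n) = min { k ∈ ℕ : c_{2k+2}/c_{2k} > 9 − 1/n }` for the hypothetical sequence. -/
noncomputable def hypR (q p : ℝ) (n : ℕ) : ℕ :=
  sInf {k : ℕ | hypCogrowth q p (2 * k + 2) / hypCogrowth q p (2 * k) > 9 - 1 / (n : ℝ)}

open Filter Real Set

noncomputable def hypEps (q : ℝ) (n : ℕ) : ℝ :=
  -Real.log (1 - 1 / (9 * (n : ℝ))) / (q * Real.log 3)

theorem delta_lb {p : ℝ} (hp0 : 0 < p) (hp1 : p < 1) {a : ℝ} (ha : 0 ≤ a) :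
    2 * p * (a + 2) ^ (p - 1) ≤ (a + 2) ^ p - a ^ p := by
  obtain ⟨c, hc, hceq⟩ := exists_hasDerivAt_eq_slope (fun x => x ^ p)
      (fun x => p * x ^ (p - 1)) (by linarith : a < a + 2)
      (fun x hx => (Real.continuousAt_rpow_const x p (Or.inr hp0.le)).continuousWithinAt)
      (fun x hx => Real.hasDerivAt_rpow_const (Or.inl (by
        have : a < x := hx.1
        linarith [this, ha] : x ≠ 0)))
  have hc0 : 0 < c := lt_of_le_of_lt ha hc.1
  have h1 : c ^ (p - 1) ≥ (a + 2) ^ (p - 1) :=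
    Real.rpow_le_rpow_of_nonpos hc0 hc.2.le (by linarith)
  have : (a + 2) ^ p - a ^ p = 2 * (p * c ^ (p - 1)) := by
    rw [hceq]; ring_nf
  rw [this]
  nlinarith [h1, hp0]

theorem delta_ub {p : ℝ} (hp0 : 0 < p) (hp1 : p < 1) {a : ℝ} (ha : 0 < a) :
    (a + 2) ^ p - a ^ p ≤ 2 * p * a ^ (p - 1) := by
  obtain ⟨c, hc, hceq⟩ := exists_hasDerivAt_eq_slope (fun x => x ^ p)
      (fun x => p * x ^ (p - 1)) (by linarith : a < a + 2)
      (fun x hx => (Real.continuousAt_rpow_const x p (Or.inr hp0.le)).continuousWithinAt)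
      (fun x hx => Real.hasDerivAt_rpow_const (Or.inl (by
        have : a < x := hx.1
        linarith : x ≠ 0)))
  have hc0 : 0 < c := lt_of_le_of_lt ha.le hc.1
  have h1 : c ^ (p - 1) ≤ a ^ (p - 1) :=
    Real.rpow_le_rpow_of_nonpos ha hc.1.le (by linarith)
  have : (a + 2) ^ p - a ^ p = 2 * (p * c ^ (p - 1)) := by
    rw [hceq]; ring_nf
  rw [this]
  nlinarith [h1, hp0]

theorem eps_pos {q : ℝ} (hq : 0 < q) {n : ℕ} (hn : 1 ≤ n) : 0 < hypEps q n := by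
  have hn1 : (1:ℝ) ≤ (n:ℝ) := by exact_mod_cast hn
  have h9 : (0:ℝ) < 9 * n := by linarith
  have ht0 : 0 < 1 - 1 / (9 * (n:ℝ)) := by
    have : 1 / (9 * (n:ℝ)) ≤ 1 / 9 := by
      apply one_div_le_one_div_of_le <;> linarith
    linarith
  have ht1 : 1 - 1 / (9 * (n:ℝ)) < 1 := by
    have : 0 < 1 / (9 * (n:ℝ)) := by positivity
    linarith
  have hlog : Real.log (1 - 1 / (9 * (n:ℝ))) < 0 := Real.log_neg ht0 ht1
  have h3 : (0:ℝ) < Real.log 3 := Real.log_pos (by norm_num)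
  exact div_pos (by linarith) (by positivity)

theorem mem_iff (q p : ℝ) (hq : 0 < q) (hp0 : 0 < p) (hp1 : p < 1)
    {n : ℕ} (hn : 1 ≤ n) (k : ℕ) :
    (hypCogrowth q p (2 * k + 2) / hypCogrowth q p (2 * k) > 9 - 1 / (n : ℝ)) ↔
      ((2 * (k:ℝ) + 2) ^ p - (2 * (k:ℝ)) ^ p < hypEps q n) := by
  have hn1 : (1:ℝ) ≤ (n:ℝ) := by exact_mod_cast hn
  have ht0 : 0 < 1 - 1 / (9 * (n:ℝ)) := by
    have : 1 / (9 * (n:ℝ)) ≤ 1 / 9 := by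
      apply one_div_le_one_div_of_le <;> linarith
    linarith
  have h3 : (0:ℝ) < Real.log 3 := Real.log_pos (by norm_num)
  set Δ : ℝ := (2 * (k:ℝ) + 2) ^ p - (2 * (k:ℝ)) ^ p with hΔ
  have hratio : hypCogrowth q p (2 * k + 2) / hypCogrowth q p (2 * k)
      = 9 * (3:ℝ) ^ (-(q * Δ)) := by
    rw [hypCogrowth, hypCogrowth, ← Real.rpow_sub (by norm_num : (0:ℝ) < 3)]
    have hcast : ((2 * k + 2 : ℕ) : ℝ) = 2 * (k:ℝ) + 2 := by push_cast; ring
    have hcast2 : ((2 * k : ℕ) : ℝ) = 2 * (k:ℝ) := by push_cast; ring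
    rw [hcast, hcast2]
    have hexp : (2 * (k:ℝ) + 2 - q * (2 * (k:ℝ) + 2) ^ p) - (2 * (k:ℝ) - q * (2 * (k:ℝ)) ^ p)
        = 2 + -(q * Δ) := by rw [hΔ]; ring
    rw [hexp, Real.rpow_add (by norm_num : (0:ℝ) < 3)]
    norm_num
  have h9 : (9:ℝ) - 1 / n = 9 * (1 - 1 / (9 * (n:ℝ))) := by
    field_simp
  rw [hratio, h9, gt_iff_lt, mul_lt_mul_iff_right₀ (by norm_num : (0:ℝ) < 9),
    Real.lt_rpow_iff_log_lt ht0 (by norm_num : (0:ℝ) < 3), hypEps,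
    lt_div_iff₀ (by positivity : 0 < q * Real.log 3)]
  constructor <;> intro h <;> nlinarith

theorem R_bounds (q p : ℝ) (hq : 0 < q) (hp0 : 0 < p) (hp1 : p < 1)
    {n : ℕ} (hn : 1 ≤ n) :
    (2 * p / hypEps q n) ^ ((1 - p)⁻¹) / 2 - 1 ≤ (hypR q p n : ℝ) ∧
    (hypR q p n : ℝ) ≤ (2 * p / hypEps q n) ^ ((1 - p)⁻¹) / 2 + 1 := by
  have h1p : (0:ℝ) < 1 - p := by linarith
  set E := hypEps q n with hEdef
  have hE : 0 < E := eps_pos hq hn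
  set r : ℝ := (1 - p)⁻¹ with hrdef
  have hr : 0 < r := by positivity
  have hbase : 0 < 2 * p / E := by positivity
  set X : ℝ := (2 * p / E) ^ r / 2 with hXdef
  have hX0 : 0 ≤ X := by positivity
  -- the membership set
  set S : Set ℕ := {k : ℕ | hypCogrowth q p (2 * k + 2) / hypCogrowth q p (2 * k)
      > 9 - 1 / (n : ℝ)} with hSdef
  have hpow_id : ((2 * p / E) ^ r) ^ (p - 1) = E / (2 * p) := by
    rw [← Real.rpow_mul hbase.le]
    have : r * (p - 1) = -1 := by
      rw [hrdef]; field_simp; ring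
    rw [this, Real.rpow_neg_one, inv_div]
  set K : ℕ := ⌊X⌋₊ + 1 with hKdef
  have hKX : X < (K : ℝ) := by
    rw [hKdef]; push_cast; exact Nat.lt_floor_add_one X
  have hKmem : K ∈ S := by
    rw [hSdef, Set.mem_setOf_eq, mem_iff q p hq hp0 hp1 hn]
    have h2K0 : (0:ℝ) < 2 * (K : ℝ) := by positivity
    calc (2 * (K:ℝ) + 2) ^ p - (2 * (K:ℝ)) ^ p
        ≤ 2 * p * (2 * (K:ℝ)) ^ (p - 1) := delta_ub hp0 hp1 h2K0
      _ < 2 * p * (E / (2 * p)) := by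
          apply (mul_lt_mul_iff_right₀ (by positivity : (0:ℝ) < 2 * p)).2
          have hlt : (2 * p / E) ^ r < 2 * (K:ℝ) := by
            have : (2 * p / E) ^ r = 2 * X := by rw [hXdef]; ring
            rw [this]; linarith
          have := Real.rpow_lt_rpow_of_neg (by positivity) hlt (by linarith : p - 1 < 0)
          rwa [hpow_id] at this
      _ = E := by field_simp
  have hRK : hypR q p n ≤ K := Nat.sInf_le hKmem
  constructor
  · -- lower bound
    have hmem : hypR q p n ∈ S := Nat.sInf_mem ⟨K, hKmem⟩
    rw [hSdef, Set.mem_setOf_eq, mem_iff q p hq hp0 hp1 hn] at hmem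
    set R : ℕ := hypR q p n
    have hlb : 2 * p * (2 * (R:ℝ) + 2) ^ (p - 1) ≤ (2 * (R:ℝ) + 2) ^ p - (2 * (R:ℝ)) ^ p :=
      delta_lb hp0 hp1 (by positivity)
    have h1 : (2 * (R:ℝ) + 2) ^ (p - 1) < E / (2 * p) := by
      have h2p : (0:ℝ) < 2 * p := by positivity
      rw [lt_div_iff₀ h2p]
      nlinarith
    have h2 : 2 * p / E < (2 * (R:ℝ) + 2) ^ (1 - p) := by
      have ha : (0:ℝ) < 2 * (R:ℝ) + 2 := by positivity
      have hinv : (2 * (R:ℝ) + 2) ^ (p - 1) = ((2 * (R:ℝ) + 2) ^ (1 - p))⁻¹ := by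
        rw [← Real.rpow_neg ha.le]; norm_num
      have hEp : E / (2 * p) = (2 * p / E)⁻¹ := by rw [inv_div]
      rw [hinv, hEp] at h1
      exact (inv_lt_inv₀ (by positivity) hbase).1 h1
    have h3 : (2 * p / E) ^ r < 2 * (R:ℝ) + 2 := by
      have := Real.rpow_lt_rpow hbase.le h2 hr
      rwa [← Real.rpow_mul (by positivity : (0:ℝ) ≤ 2 * (R:ℝ) + 2),
        mul_inv_cancel₀ (ne_of_gt h1p), Real.rpow_one] at this
    have : X < (R:ℝ) + 1 := by rw [hXdef]; linarith
    linarith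
  · -- upper bound
    have : (K : ℝ) ≤ X + 1 := by
      rw [hKdef]; push_cast
      have := Nat.floor_le hX0
      linarith
    have hcast : (hypR q p n : ℝ) ≤ (K : ℝ) := by exact_mod_cast hRK
    linarith

theorem partI (q p : ℝ) (hq : 0 < q) (hp0 : 0 < p) (hp1 : p < 1) :
    Filter.limsup (fun n : ℕ => (hypCogrowth q p n) ^ ((n : ℝ)⁻¹)) Filter.atTop = 3 := by
  have h1 : Tendsto (fun n : ℕ => ((n : ℝ)) ^ (p - 1)) atTop (nhds 0) := by
    have := (tendsto_rpow_neg_atTop (by linarith : (0:ℝ) < 1 - p)).comp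
      (tendsto_natCast_atTop_atTop (R := ℝ))
    simpa [Function.comp_def, neg_sub] using this
  have h2 : Tendsto (fun n : ℕ => 1 - q * (n : ℝ) ^ (p - 1)) atTop (nhds 1) := by
    have := (tendsto_const_nhds : Tendsto (fun _ : ℕ => (1:ℝ)) atTop (nhds 1)).sub
      (h1.const_mul q)
    simpa using this
  have h3 : Tendsto (fun n : ℕ => (3:ℝ) ^ (1 - q * (n : ℝ) ^ (p - 1))) atTop (nhds 3) := by
    have := (tendsto_const_nhds : Tendsto (fun _ : ℕ => (3:ℝ)) atTop (nhds 3)).rpow h2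
      (Or.inl (by norm_num))
    simpa using this
  have heq : ∀ᶠ n : ℕ in atTop,
      (3:ℝ) ^ (1 - q * (n : ℝ) ^ (p - 1)) = (hypCogrowth q p n) ^ ((n : ℝ)⁻¹) := by
    filter_upwards [eventually_ge_atTop 1] with n hn
    have hn0 : (0:ℝ) < (n:ℝ) := by exact_mod_cast hn
    rw [hypCogrowth, ← Real.rpow_mul (by norm_num : (0:ℝ) ≤ 3)]
    congr 1
    have : ((n:ℝ) - q * (n:ℝ) ^ p) * (n:ℝ)⁻¹
        = 1 - q * ((n:ℝ) ^ p * (n:ℝ) ^ (-1:ℝ)) := by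
      rw [Real.rpow_neg_one]; field_simp
    rw [this, ← Real.rpow_add hn0]
    ring_nf
  exact (h3.congr' heq).limsup_eq

theorem partII (q p : ℝ) (hq : 0 < q) (hp0 : 0 < p) (hp1 : p < 1) :
    Filter.Tendsto
      (fun n : ℕ => (hypR q p n : ℝ) /
        (9 * Real.log 3 * q * p * (2 : ℝ) ^ p * (n : ℝ)) ^ ((1 - p)⁻¹))
      Filter.atTop (nhds 1) := by
  have h1p : (0:ℝ) < 1 - p := by linarith
  have hlog3 : (0:ℝ) < Real.log 3 := Real.log_pos (by norm_num)
  set r : ℝ := (1 - p)⁻¹ with hrdef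
  have hr : 0 < r := by positivity
  set c0 : ℝ := 9 * Real.log 3 * q * p * (2 : ℝ) ^ p with hc0def
  have hc0 : 0 < c0 := by positivity
  set D : ℕ → ℝ := fun n => (c0 * (n : ℝ)) ^ r with hDdef
  set X : ℕ → ℝ := fun n => (2 * p / hypEps q n) ^ r / 2 with hXdef
  set T : ℕ → ℝ := fun n => -9 * ((n : ℝ) * Real.log (1 + (-(1/9)) / (n : ℝ))) with hTdef
  -- T → 1
  have hT : Tendsto T atTop (nhds 1) := by
    have hcomp := (Real.tendsto_mul_log_one_add_div_atTop (-(1/9))).comp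
      (tendsto_natCast_atTop_atTop (R := ℝ))
    have h := hcomp.const_mul (-9 : ℝ)
    have h19 : (-9 : ℝ) * -(1/9) = 1 := by norm_num
    rw [h19] at h
    exact h
  have hW : Tendsto (fun n : ℕ => ((T n)⁻¹) ^ r) atTop (nhds 1) := by
    have := (hT.inv₀ one_ne_zero).rpow_const (p := r) (Or.inl (by norm_num : (1:ℝ)⁻¹ ≠ 0))
    simpa using this
  -- D → ∞
  have hDtop : Tendsto D atTop atTop := by
    have h1 : Tendsto (fun n : ℕ => c0 * (n : ℝ)) atTop atTop :=
      (tendsto_natCast_atTop_atTop (R := ℝ)).const_mul_atTop hc0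
    exact (tendsto_rpow_atTop hr).comp h1
  have hDinv : Tendsto (fun n : ℕ => (D n)⁻¹) atTop (nhds 0) := hDtop.inv_tendsto_atTop
  -- identity X n / D n = (T n)⁻¹ ^ r for n ≥ 1
  have hiden : ∀ᶠ n : ℕ in atTop, ((T n)⁻¹) ^ r = X n / D n := by
    filter_upwards [eventually_ge_atTop 1] with n hn
    have hE : 0 < hypEps q n := eps_pos hq hn
    have hn0 : (0:ℝ) < (n : ℝ) := by exact_mod_cast hn
    have h2 : (2:ℝ) ^ (1 - p) * (2:ℝ) ^ p = 2 := by
      rw [← Real.rpow_add (by norm_num : (0:ℝ) < 2)]; norm_num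
    have hTval : T n = 9 * Real.log 3 * q * (n : ℝ) * hypEps q n := by
      simp only [hTdef]
      have harg : 1 + (-(1/9)) / (n : ℝ) = 1 - 1 / (9 * (n : ℝ)) := by
        field_simp; ring
      rw [harg, hypEps]
      field_simp
    have hTpos : 0 < T n := by
      rw [hTval]; positivity
    have h2r : ((2:ℝ) ^ (1 - p)) ^ r = 2 := by
      rw [← Real.rpow_mul (by norm_num : (0:ℝ) ≤ 2), mul_inv_cancel₀ (ne_of_gt h1p),
        Real.rpow_one]
    have hc0n : (2:ℝ) ^ (1 - p) * (c0 * (n : ℝ)) = 2 * (9 * Real.log 3 * q * p * (n : ℝ)) := by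
      calc (2:ℝ) ^ (1 - p) * (c0 * (n : ℝ))
          = ((2:ℝ) ^ (1 - p) * (2:ℝ) ^ p) * (9 * Real.log 3 * q * p * (n : ℝ)) := by
            rw [hc0def]; ring
        _ = 2 * (9 * Real.log 3 * q * p * (n : ℝ)) := by rw [h2]
    calc ((T n)⁻¹) ^ r
        = ((2 * p / hypEps q n) / ((2:ℝ) ^ (1 - p) * (c0 * (n : ℝ)))) ^ r := by
          congr 1
          rw [hc0n, hTval]
          field_simp
      _ = ((2 * p / hypEps q n) ^ r) / (((2:ℝ) ^ (1 - p)) ^ r * ((c0 * (n : ℝ)) ^ r)) := by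
          rw [← Real.mul_rpow (by positivity) (by positivity),
            ← Real.div_rpow (by positivity) (by positivity)]
      _ = X n / D n := by rw [h2r, hXdef, hDdef]; ring
  have hXD : Tendsto (fun n : ℕ => X n / D n) atTop (nhds 1) := hW.congr' hiden
  -- squeeze
  have hlow : Tendsto (fun n : ℕ => X n / D n - (D n)⁻¹) atTop (nhds 1) := by
    have := hXD.sub hDinv; simpa using this
  have hup : Tendsto (fun n : ℕ => X n / D n + (D n)⁻¹) atTop (nhds 1) := by
    have := hXD.add hDinv; simpa using this
  have hkey : ∀ᶠ n : ℕ in atTop,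
      (X n - 1 ≤ (hypR q p n : ℝ) ∧ (hypR q p n : ℝ) ≤ X n + 1) ∧ 0 < D n := by
    filter_upwards [eventually_ge_atTop 1] with n hn
    have hn0 : (0:ℝ) < (n : ℝ) := by exact_mod_cast hn
    have h := R_bounds q p hq hp0 hp1 hn
    rw [← hrdef] at h
    simp only [hXdef]
    refine ⟨⟨by linarith [h.1], by linarith [h.2]⟩, ?_⟩
    exact Real.rpow_pos_of_pos (mul_pos hc0 hn0) r
  apply tendsto_of_tendsto_of_tendsto_of_le_of_le' hlow hup
  · filter_upwards [hkey] with n hn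
    obtain ⟨⟨h1, h2⟩, hD0⟩ := hn
    show X n / D n - (D n)⁻¹ ≤ (hypR q p n : ℝ) / D n
    rw [← one_div, ← sub_div]
    exact div_le_div_of_nonneg_right h1 hD0.le |>.trans_eq rfl
  · filter_upwards [hkey] with n hn
    obtain ⟨⟨h1, h2⟩, hD0⟩ := hn
    show (hypR q p n : ℝ) / D n ≤ X n / D n + (D n)⁻¹
    rw [← one_div, ← add_div]
    exact div_le_div_of_nonneg_right h2 hD0.le |>.trans_eq rfl

/-- For `cₙ = 3^{n − q·nᵖ}` with `q > 0` and `0 < p < 1`: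
(i) `limsup cₙ^{1/n} = 3`, and
(ii) `R(n) / (9·ln(3)·q·p·2ᵖ·n)^{1/(1−p)} → 1` as `n → ∞`. -/
theorem hyp_cogrowth_props (q p : ℝ) (hq : 0 < q) (hp0 : 0 < p) (hp1 : p < 1) :
    Filter.limsup (fun n : ℕ => (hypCogrowth q p n) ^ ((n : ℝ)⁻¹)) Filter.atTop = 3 ∧
    Filter.Tendsto
      (fun n : ℕ => (hypR q p n : ℝ) /
        (9 * Real.log 3 * q * p * (2 : ℝ) ^ p * (n : ℝ)) ^ ((1 - p)⁻¹))
      Filter.atTop (nhds 1) := by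
  exact ⟨partI q p hq hp0 hp1, partII q p hq hp0 hp1⟩
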